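/- Let (V,⟨·,·⟩) be a real inner product space of dimension n ≥ 4 and let R be an algebraic curvature tensor on V having 3-positive curvature operator of the second kind. Then for every orthonormal four-frame {e_1,e_2,e_3,e_4} in V and every real number λ, one has R_{1313} + λ²R_{1414} + R_{2323} + λ²R_{2424} - 4λR_{1234} > 0. -/

import Mathlib

open scoped RealInnerProductSpace

variable {V : Type*} [NormedAddCommGroup V] [InnerProductSpace ℝ V]

/-- `R` is an algebraic curvature tensor: antisymmetric in the first two slots,
symmetric under exchange of the first and second pairs, and satisfying the
first Bianchi identity. -/
def IsAlgCurvatureTensor (R : V →ₗ[ℝ] V →ₗ[ℝ] V →ₗ[ℝ] V →ₗ[ℝ] ℝ) : Prop :=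
  (∀ x y z w : V, R x y z w = - R y x z w) ∧
  (∀ x y z w : V, R x y z w = R z w x y) ∧
  (∀ x y z w : V, R x y z w + R y z x w + R z x y w = 0)

/-- The Ricci curvature `Ric(x,y) = Σ_j R(x,e_j,y,e_j)` with respect to an
orthonormal basis. -/
noncomputable def ricci {n : ℕ} (b : OrthonormalBasis (Fin n) ℝ V)
    (R : V →ₗ[ℝ] V →ₗ[ℝ] V →ₗ[ℝ] V →ₗ[ℝ] ℝ) (x y : V) : ℝ :=
  ∑ j, R x (b j) y (b j)

/-- The scalar curvature `S = Σ_{i,j} R_{ijij}`. -/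
noncomputable def scalarCurv {n : ℕ} (b : OrthonormalBasis (Fin n) ℝ V)
    (R : V →ₗ[ℝ] V →ₗ[ℝ] V →ₗ[ℝ] V →ₗ[ℝ] ℝ) : ℝ :=
  ∑ i, ∑ j, R (b i) (b j) (b i) (b j)

/-- `φ` is a symmetric bilinear form which is traceless with respect to the
orthonormal basis `b`. -/
def IsTracelessSymForm {n : ℕ} (b : OrthonormalBasis (Fin n) ℝ V)
    (φ : V →ₗ[ℝ] V →ₗ[ℝ] ℝ) : Prop :=
  (∀ x y : V, φ x y = φ y x) ∧ (∑ i, φ (b i) (b i) = 0)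

/-- The inner product `⟨φ,ψ⟩ = Σ_{i,j} φ(e_i,e_j) ψ(e_i,e_j)` of bilinear forms. -/
noncomputable def formInner {n : ℕ} (b : OrthonormalBasis (Fin n) ℝ V)
    (φ ψ : V →ₗ[ℝ] V →ₗ[ℝ] ℝ) : ℝ :=
  ∑ i, ∑ j, φ (b i) (b j) * ψ (b i) (b j)

/-- The curvature operator of the second kind
`R̊(φ,ψ) = Σ_{i,j,k,l} R_{ijkl} φ(e_i,e_l) ψ(e_j,e_k)`. -/
noncomputable def secondKind {n : ℕ} (b : OrthonormalBasis (Fin n) ℝ V)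
    (R : V →ₗ[ℝ] V →ₗ[ℝ] V →ₗ[ℝ] V →ₗ[ℝ] ℝ)
    (φ ψ : V →ₗ[ℝ] V →ₗ[ℝ] ℝ) : ℝ :=
  ∑ i, ∑ j, ∑ k, ∑ l,
    R (b i) (b j) (b k) (b l) * φ (b i) (b l) * ψ (b j) (b k)

/-- `R` has `k`-nonnegative curvature operator of the second kind:
`Σ_{a=1}^k R̊(φ_a,φ_a) ≥ 0` for every orthonormal `k`-tuple of traceless
symmetric bilinear forms. -/
def kNonnegSecondKind {n : ℕ} (b : OrthonormalBasis (Fin n) ℝ V)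
    (R : V →ₗ[ℝ] V →ₗ[ℝ] V →ₗ[ℝ] V →ₗ[ℝ] ℝ) (k : ℕ) : Prop :=
  ∀ φ : Fin k → (V →ₗ[ℝ] V →ₗ[ℝ] ℝ),
    (∀ a, IsTracelessSymForm b (φ a)) →
    (∀ a a', formInner b (φ a) (φ a') = if a = a' then 1 else 0) →
    0 ≤ ∑ a, secondKind b R (φ a) (φ a)

/-- `R` has `k`-positive curvature operator of the second kind:
`Σ_{a=1}^k R̊(φ_a,φ_a) > 0` for every orthonormal `k`-tuple of traceless
symmetric bilinear forms. -/
def kPosSecondKind {n : ℕ} (b : OrthonormalBasis (Fin n) ℝ V)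
    (R : V →ₗ[ℝ] V →ₗ[ℝ] V →ₗ[ℝ] V →ₗ[ℝ] ℝ) (k : ℕ) : Prop :=
  ∀ φ : Fin k → (V →ₗ[ℝ] V →ₗ[ℝ] ℝ),
    (∀ a, IsTracelessSymForm b (φ a)) →
    (∀ a a', formInner b (φ a) (φ a') = if a = a' then 1 else 0) →
    0 < ∑ a, secondKind b R (φ a) (φ a)

/-! ### Auxiliary machinery -/

/-- The elementary bilinear form `x y ↦ ⟪u,x⟫⟪v,y⟫`. -/
noncomputable def bf (u v : V) : V →ₗ[ℝ] V →ₗ[ℝ] ℝ :=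
  LinearMap.mk₂ ℝ (fun x y => ⟪u, x⟫ * ⟪v, y⟫)
    (fun x x' y => by simp [inner_add_right]; ring)
    (fun c x y => by simp [inner_smul_right]; ring)
    (fun x y y' => by simp [inner_add_right]; ring)
    (fun c x y => by simp [inner_smul_right]; ring)

@[simp] lemma bf_apply (u v x y : V) : bf u v x y = ⟪u, x⟫ * ⟪v, y⟫ := rfl

/-- `p·(u1⊙u2) + q·(u3⊙u4)` (unnormalized symmetrization). -/
noncomputable def shapeA (p q : ℝ) (u1 u2 u3 u4 : V) : V →ₗ[ℝ] V →ₗ[ℝ] ℝ :=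
  p • (bf u1 u2 + bf u2 u1) + q • (bf u3 u4 + bf u4 u3)

/-- diagonal form `p·u1⊗u1 + q·u2⊗u2 + t·u3⊗u3`. -/
noncomputable def shapeB (p q t : ℝ) (u1 u2 u3 : V) : V →ₗ[ℝ] V →ₗ[ℝ] ℝ :=
  p • bf u1 u1 + q • bf u2 u2 + t • bf u3 u3

section auxlemmas
variable {n : ℕ} (b : OrthonormalBasis (Fin n) ℝ V)
  (R : V →ₗ[ℝ] V →ₗ[ℝ] V →ₗ[ℝ] V →ₗ[ℝ] ℝ) (φ ψ χ : V →ₗ[ℝ] V →ₗ[ℝ] ℝ) (c : ℝ)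

lemma parseval (u v : V) : ∑ i, ⟪u, b i⟫ * ⟪v, b i⟫ = ⟪u, v⟫ := by
  have := b.sum_inner_mul_inner u v
  simp_rw [real_inner_comm v] at this
  rw [this, real_inner_comm]

lemma collapse (L : V →ₗ[ℝ] ℝ) (u : V) : ∑ i, ⟪u, b i⟫ * L (b i) = L u := by
  conv_rhs => rw [← b.sum_repr' u]
  rw [map_sum]
  refine Finset.sum_congr rfl fun i _ => ?_
  rw [map_smul, smul_eq_mul, real_inner_comm]

lemma trace_bf (u v : V) : ∑ i, bf u v (b i) (b i) = ⟪u, v⟫ := by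
  simp only [bf_apply]; exact parseval b u v

lemma trace_add : ∑ i, (φ + ψ) (b i) (b i) = ∑ i, φ (b i) (b i) + ∑ i, ψ (b i) (b i) := by
  simp [LinearMap.add_apply, Finset.sum_add_distrib]

lemma trace_smul : ∑ i, (c • φ) (b i) (b i) = c * ∑ i, φ (b i) (b i) := by
  simp [LinearMap.smul_apply, smul_eq_mul, Finset.mul_sum]

lemma formInner_bf (u v u' v' : V) :
    formInner b (bf u v) (bf u' v') = ⟪u, u'⟫ * ⟪v, v'⟫ := by
  unfold formInner
  have h : ∀ i, ∑ j, bf u v (b i) (b j) * bf u' v' (b i) (b j)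
      = (⟪u, b i⟫ * ⟪u', b i⟫) * ⟪v, v'⟫ := by
    intro i
    rw [← parseval b v v', Finset.mul_sum]
    refine Finset.sum_congr rfl fun j _ => ?_
    simp only [bf_apply]; ring
  rw [Finset.sum_congr rfl fun i _ => h i, ← Finset.sum_mul, parseval]

lemma fi_add_left : formInner b (φ + ψ) χ = formInner b φ χ + formInner b ψ χ := by
  simp [formInner, LinearMap.add_apply, add_mul, Finset.sum_add_distrib]

lemma fi_smul_left : formInner b (c • φ) χ = c * formInner b φ χ := by
  simp only [formInner, LinearMap.smul_apply, smul_eq_mul, Finset.mul_sum]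
  exact Finset.sum_congr rfl fun i _ => Finset.sum_congr rfl fun j _ => by ring

lemma fi_add_right : formInner b φ (ψ + χ) = formInner b φ ψ + formInner b φ χ := by
  simp [formInner, LinearMap.add_apply, mul_add, Finset.sum_add_distrib]

lemma fi_smul_right : formInner b φ (c • ψ) = c * formInner b φ ψ := by
  simp only [formInner, LinearMap.smul_apply, smul_eq_mul, Finset.mul_sum]
  exact Finset.sum_congr rfl fun i _ => Finset.sum_congr rfl fun j _ => by ring

lemma fi_comm : formInner b φ ψ = formInner b ψ φ := by
  simp [formInner, mul_comm]

lemma sk_add_left : secondKind b R (φ + ψ) χ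
    = secondKind b R φ χ + secondKind b R ψ χ := by
  simp [secondKind, LinearMap.add_apply, add_mul, mul_add, Finset.sum_add_distrib]

lemma sk_smul_left : secondKind b R (c • φ) χ = c * secondKind b R φ χ := by
  simp only [secondKind, LinearMap.smul_apply, smul_eq_mul, Finset.mul_sum]
  exact Finset.sum_congr rfl fun i _ => Finset.sum_congr rfl fun j _ =>
    Finset.sum_congr rfl fun k _ => Finset.sum_congr rfl fun l _ => by ring

lemma sk_add_right : secondKind b R φ (ψ + χ)
    = secondKind b R φ ψ + secondKind b R φ χ := by
  simp [secondKind, LinearMap.add_apply, mul_add, Finset.sum_add_distrib]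

lemma sk_smul_right : secondKind b R φ (c • ψ) = c * secondKind b R φ ψ := by
  simp only [secondKind, LinearMap.smul_apply, smul_eq_mul, Finset.mul_sum]
  exact Finset.sum_congr rfl fun i _ => Finset.sum_congr rfl fun j _ =>
    Finset.sum_congr rfl fun k _ => Finset.sum_congr rfl fun l _ => by ring

lemma secondKind_bf (u v u' v' : V) :
    secondKind b R (bf u v) (bf u' v') = R u u' v' v := by
  unfold secondKind
  have c4 : ∀ x y z : V, ∑ l, ⟪v, b l⟫ * R x y z (b l) = R x y z v :=
    fun x y z => collapse b (R x y z) v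
  have c3 : ∀ x y : V, ∑ k, ⟪v', b k⟫ * R x y (b k) v = R x y v' v := by
    intro x y
    simpa using collapse b ((LinearMap.applyₗ (R := ℝ) v).comp (R x y)) v'
  have c2 : ∀ x : V, ∑ j, ⟪u', b j⟫ * R x (b j) v' v = R x u' v' v := by
    intro x
    simpa using collapse b ((LinearMap.applyₗ (R := ℝ) v).comp
      ((LinearMap.applyₗ (R := ℝ) v').comp (R x))) u'
  have c1 : ∑ i, ⟪u, b i⟫ * R (b i) u' v' v = R u u' v' v := by
    simpa using collapse b ((LinearMap.applyₗ (R := ℝ) v).comp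
      ((LinearMap.applyₗ (R := ℝ) v').comp
        ((LinearMap.applyₗ (R := ℝ) u').comp R))) u
  calc ∑ i, ∑ j, ∑ k, ∑ l, R (b i) (b j) (b k) (b l) * bf u v (b i) (b l)
        * bf u' v' (b j) (b k)
      = ∑ i, ⟪u, b i⟫ * R (b i) u' v' v := by
        refine Finset.sum_congr rfl fun i _ => ?_
        rw [← c2 (b i), Finset.mul_sum]
        refine Finset.sum_congr rfl fun j _ => ?_
        rw [← c3 (b i) (b j), Finset.mul_sum, Finset.mul_sum]
        refine Finset.sum_congr rfl fun k _ => ?_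
        rw [← c4 (b i) (b j) (b k), Finset.mul_sum, Finset.mul_sum, Finset.mul_sum]
        refine Finset.sum_congr rfl fun l _ => ?_
        simp only [bf_apply]; ring
    _ = R u u' v' v := c1

lemma sk_AA (p q : ℝ) (u1 u2 u3 u4 : V) :
    secondKind b R (shapeA p q u1 u2 u3 u4) (shapeA p q u1 u2 u3 u4)
    = p^2*(R u1 u1 u2 u2 + R u1 u2 u1 u2 + R u2 u1 u2 u1 + R u2 u2 u1 u1)
    + q^2*(R u3 u3 u4 u4 + R u3 u4 u3 u4 + R u4 u3 u4 u3 + R u4 u4 u3 u3)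
    + p*q*(R u1 u3 u4 u2 + R u1 u4 u3 u2 + R u2 u3 u4 u1 + R u2 u4 u3 u1
        + R u3 u1 u2 u4 + R u3 u2 u1 u4 + R u4 u1 u2 u3 + R u4 u2 u1 u3) := by
  simp only [shapeA, sk_add_left, sk_add_right, sk_smul_left, sk_smul_right, secondKind_bf]
  ring

lemma sk_BB (p q t : ℝ) (u1 u2 u3 : V) :
    secondKind b R (shapeB p q t u1 u2 u3) (shapeB p q t u1 u2 u3)
    = p^2*(R u1 u1 u1 u1) + q^2*(R u2 u2 u2 u2) + t^2*(R u3 u3 u3 u3)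
    + p*q*(R u1 u2 u2 u1 + R u2 u1 u1 u2)
    + p*t*(R u1 u3 u3 u1 + R u3 u1 u1 u3)
    + q*t*(R u2 u3 u3 u2 + R u3 u2 u2 u3) := by
  simp only [shapeB, sk_add_left, sk_add_right, sk_smul_left, sk_smul_right, secondKind_bf]
  ring

lemma fi_AA (p q p' q' : ℝ) (u1 u2 u3 u4 v1 v2 v3 v4 : V) :
    formInner b (shapeA p q u1 u2 u3 u4) (shapeA p' q' v1 v2 v3 v4)
    = p*p'*(⟪u1,v1⟫*⟪u2,v2⟫ + ⟪u1,v2⟫*⟪u2,v1⟫ + ⟪u2,v1⟫*⟪u1,v2⟫ + ⟪u2,v2⟫*⟪u1,v1⟫)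
    + p*q'*(⟪u1,v3⟫*⟪u2,v4⟫ + ⟪u1,v4⟫*⟪u2,v3⟫ + ⟪u2,v3⟫*⟪u1,v4⟫ + ⟪u2,v4⟫*⟪u1,v3⟫)
    + q*p'*(⟪u3,v1⟫*⟪u4,v2⟫ + ⟪u3,v2⟫*⟪u4,v1⟫ + ⟪u4,v1⟫*⟪u3,v2⟫ + ⟪u4,v2⟫*⟪u3,v1⟫)
    + q*q'*(⟪u3,v3⟫*⟪u4,v4⟫ + ⟪u3,v4⟫*⟪u4,v3⟫ + ⟪u4,v3⟫*⟪u3,v4⟫ + ⟪u4,v4⟫*⟪u3,v3⟫) := by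
  simp only [shapeA, fi_add_left, fi_add_right, fi_smul_left, fi_smul_right, formInner_bf]
  ring

lemma fi_AB (p q p' q' t' : ℝ) (u1 u2 u3 u4 v1 v2 v3 : V) :
    formInner b (shapeA p q u1 u2 u3 u4) (shapeB p' q' t' v1 v2 v3)
    = p*p'*(⟪u1,v1⟫*⟪u2,v1⟫ + ⟪u2,v1⟫*⟪u1,v1⟫)
    + p*q'*(⟪u1,v2⟫*⟪u2,v2⟫ + ⟪u2,v2⟫*⟪u1,v2⟫)
    + p*t'*(⟪u1,v3⟫*⟪u2,v3⟫ + ⟪u2,v3⟫*⟪u1,v3⟫)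
    + q*p'*(⟪u3,v1⟫*⟪u4,v1⟫ + ⟪u4,v1⟫*⟪u3,v1⟫)
    + q*q'*(⟪u3,v2⟫*⟪u4,v2⟫ + ⟪u4,v2⟫*⟪u3,v2⟫)
    + q*t'*(⟪u3,v3⟫*⟪u4,v3⟫ + ⟪u4,v3⟫*⟪u3,v3⟫) := by
  simp only [shapeA, shapeB, fi_add_left, fi_add_right, fi_smul_left, fi_smul_right,
    formInner_bf]
  ring

lemma fi_BB (p q t p' q' t' : ℝ) (u1 u2 u3 v1 v2 v3 : V) :
    formInner b (shapeB p q t u1 u2 u3) (shapeB p' q' t' v1 v2 v3)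
    = p*p'*(⟪u1,v1⟫*⟪u1,v1⟫) + p*q'*(⟪u1,v2⟫*⟪u1,v2⟫) + p*t'*(⟪u1,v3⟫*⟪u1,v3⟫)
    + q*p'*(⟪u2,v1⟫*⟪u2,v1⟫) + q*q'*(⟪u2,v2⟫*⟪u2,v2⟫) + q*t'*(⟪u2,v3⟫*⟪u2,v3⟫)
    + t*p'*(⟪u3,v1⟫*⟪u3,v1⟫) + t*q'*(⟪u3,v2⟫*⟪u3,v2⟫) + t*t'*(⟪u3,v3⟫*⟪u3,v3⟫) := by
  simp only [shapeB, fi_add_left, fi_add_right, fi_smul_left, fi_smul_right, formInner_bf]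
  ring

lemma tr_A (p q : ℝ) (u1 u2 u3 u4 : V) :
    ∑ i, shapeA p q u1 u2 u3 u4 (b i) (b i) = p*(⟪u1,u2⟫ + ⟪u2,u1⟫) + q*(⟪u3,u4⟫ + ⟪u4,u3⟫) := by
  rw [shapeA, trace_add, trace_smul, trace_smul, trace_add, trace_add,
    trace_bf, trace_bf, trace_bf, trace_bf]

lemma tr_B (p q t : ℝ) (u1 u2 u3 : V) :
    ∑ i, shapeB p q t u1 u2 u3 (b i) (b i) = p*⟪u1,u1⟫ + q*⟪u2,u2⟫ + t*⟪u3,u3⟫ := by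
  rw [shapeB, trace_add, trace_add, trace_smul, trace_smul, trace_smul,
    trace_bf, trace_bf, trace_bf]

lemma sym_A (p q : ℝ) (u1 u2 u3 u4 : V) (a c : V) :
    shapeA p q u1 u2 u3 u4 a c = shapeA p q u1 u2 u3 u4 c a := by
  simp only [shapeA, LinearMap.add_apply, LinearMap.smul_apply, smul_eq_mul, bf_apply]
  ring

lemma sym_B (p q t : ℝ) (u1 u2 u3 : V) (a c : V) :
    shapeB p q t u1 u2 u3 a c = shapeB p q t u1 u2 u3 c a := by
  simp only [shapeB, LinearMap.add_apply, LinearMap.smul_apply, smul_eq_mul, bf_apply]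
  ring

end auxlemmas

set_option maxHeartbeats 1600000 in
theorem stmt_11 {n : ℕ} (hn : 4 ≤ n)
    (b : OrthonormalBasis (Fin n) ℝ V)
    (R : V →ₗ[ℝ] V →ₗ[ℝ] V →ₗ[ℝ] V →ₗ[ℝ] ℝ)
    (hR : IsAlgCurvatureTensor R)
    (h3 : kPosSecondKind b R 3) :
    ∀ e : Fin 4 → V, Orthonormal ℝ e → ∀ lam : ℝ,
      0 < R (e 0) (e 2) (e 0) (e 2) + lam ^ 2 * R (e 0) (e 3) (e 0) (e 3)
          + R (e 1) (e 2) (e 1) (e 2) + lam ^ 2 * R (e 1) (e 3) (e 1) (e 3)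
          - 4 * lam * R (e 0) (e 1) (e 2) (e 3) := by
  intro e he lam
  obtain ⟨ha1, hsw, hbi⟩ := hR
  have ha2 : ∀ x y z w : V, R x y z w = - R x y w z := by
    intro a c d f
    calc R a c d f = R d f a c := hsw _ _ _ _
    _ = - R f d a c := ha1 _ _ _ _
    _ = - R a c f d := by rw [hsw f d a c]
  have hf : ∀ x y z w : V, R x y z w = R y x w z := by
    intro a c d f
    rw [ha1 a c d f, ha2 c a d f]; ring
  have hz : ∀ x z w : V, R x x z w = 0 := by
    intro a d f
    have := ha1 a a d f; linarith
  have hee : ∀ i j, ⟪e i, e j⟫ = if i = j then (1:ℝ) else 0 := orthonormal_iff_ite.mp he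
  have g00 : ⟪e 0, e 0⟫ = (1:ℝ) := by rw [hee]; simp
  have g01 : ⟪e 0, e 1⟫ = (0:ℝ) := by simp [hee]
  have g02 : ⟪e 0, e 2⟫ = (0:ℝ) := by simp [hee]
  have g03 : ⟪e 0, e 3⟫ = (0:ℝ) := by simp [hee]
  have g10 : ⟪e 1, e 0⟫ = (0:ℝ) := by simp [hee]
  have g11 : ⟪e 1, e 1⟫ = (1:ℝ) := by rw [hee]; simp
  have g12 : ⟪e 1, e 2⟫ = (0:ℝ) := by simp [hee]
  have g13 : ⟪e 1, e 3⟫ = (0:ℝ) := by simp [hee]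
  have g20 : ⟪e 2, e 0⟫ = (0:ℝ) := by simp [hee]
  have g21 : ⟪e 2, e 1⟫ = (0:ℝ) := by simp [hee]
  have g22 : ⟪e 2, e 2⟫ = (1:ℝ) := by rw [hee]; simp
  have g23 : ⟪e 2, e 3⟫ = (0:ℝ) := by simp [hee]
  have g30 : ⟪e 3, e 0⟫ = (0:ℝ) := by simp [hee]
  have g31 : ⟪e 3, e 1⟫ = (0:ℝ) := by simp [hee]
  have g32 : ⟪e 3, e 2⟫ = (0:ℝ) := by simp [hee]
  have g33 : ⟪e 3, e 3⟫ = (1:ℝ) := by rw [hee]; simp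
  have h1l : (0:ℝ) < 1 + lam ^ 2 := by positivity
  obtain ⟨y, hydef⟩ : ∃ y : ℝ, y = (Real.sqrt (1 + lam ^ 2))⁻¹ := ⟨_, rfl⟩
  have hy : (1 + lam ^ 2) * y ^ 2 = 1 := by
    rw [hydef, inv_pow, Real.sq_sqrt h1l.le, mul_inv_cancel₀ h1l.ne']
  obtain ⟨x, hxdef⟩ : ∃ x : ℝ, x = lam * y := ⟨_, rfl⟩
  have hxy : x ^ 2 + y ^ 2 = 1 := by rw [hxdef]; linear_combination hy
  obtain ⟨s2i, hs2def⟩ : ∃ s : ℝ, s = (Real.sqrt 2)⁻¹ := ⟨_, rfl⟩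
  have his2 : 2 * s2i ^ 2 = 1 := by
    rw [hs2def, inv_pow, Real.sq_sqrt (by norm_num : (0:ℝ) ≤ 2)]
    norm_num
  have hq : (0:ℝ) < 1 + x ^ 4 + y ^ 4 := by positivity
  obtain ⟨ir, hirdef⟩ : ∃ i : ℝ, i = (Real.sqrt (1 + x ^ 4 + y ^ 4))⁻¹ := ⟨_, rfl⟩
  have hir : (1 + x ^ 4 + y ^ 4) * ir ^ 2 = 1 := by
    rw [hirdef, inv_pow, Real.sq_sqrt hq.le, mul_inv_cancel₀ hq.ne']
  obtain ⟨φ1, hφ1⟩ : ∃ φ, φ = shapeA (y*s2i) (x*s2i) (e 0) (e 2) (e 1) (e 3) := ⟨_, rfl⟩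
  obtain ⟨φ2, hφ2⟩ : ∃ φ, φ = shapeA (x*s2i) (-(y*s2i)) (e 0) (e 3) (e 1) (e 2) := ⟨_, rfl⟩
  obtain ⟨φ3, hφ3⟩ : ∃ φ, φ = shapeB ir (-(y^2)*ir) (-(x^2)*ir) (e 0) (e 2) (e 3) := ⟨_, rfl⟩
  obtain ⟨φ4, hφ4⟩ : ∃ φ, φ = shapeB ir (-(y^2)*ir) (-(x^2)*ir) (e 1) (e 2) (e 3) := ⟨_, rfl⟩
  obtain ⟨φ5, hφ5⟩ : ∃ φ, φ = shapeB s2i (-s2i) 0 (e 2) (e 3) (e 0) := ⟨_, rfl⟩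
  -- curvature component identities
  have c1 : R (e 2) (e 1) (e 3) (e 0) = R (e 0) (e 3) (e 1) (e 2) := by
    rw [hf (e 2) (e 1) (e 3) (e 0)]; exact hsw _ _ _ _
  have c2 : R (e 2) (e 3) (e 1) (e 0) = - R (e 0) (e 1) (e 2) (e 3) := by
    rw [hsw (e 2) (e 3) (e 1) (e 0)]; exact ha1 _ _ _ _
  have c3 : R (e 3) (e 2) (e 0) (e 1) = - R (e 0) (e 1) (e 2) (e 3) := by
    rw [hsw (e 3) (e 2) (e 0) (e 1)]; exact ha2 _ _ _ _
  have d3 : R (e 3) (e 1) (e 2) (e 0) = - R (e 0) (e 2) (e 3) (e 1) := by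
    rw [hsw (e 3) (e 1) (e 2) (e 0)]; exact ha1 _ _ _ _
  have d4 : R (e 3) (e 2) (e 1) (e 0) = R (e 0) (e 1) (e 2) (e 3) := by
    rw [hf (e 3) (e 2) (e 1) (e 0)]; exact hsw _ _ _ _
  have d7 : R (e 1) (e 3) (e 0) (e 2) = - R (e 0) (e 2) (e 3) (e 1) := by
    rw [hsw (e 1) (e 3) (e 0) (e 2)]; exact ha2 _ _ _ _
  have m2 : R (e 2) (e 0) (e 0) (e 2) = - R (e 0) (e 2) (e 0) (e 2) := by
    rw [hf (e 2) (e 0) (e 0) (e 2)]; exact ha2 _ _ _ _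
  have m4 : R (e 3) (e 0) (e 0) (e 3) = - R (e 0) (e 3) (e 0) (e 3) := by
    rw [hf (e 3) (e 0) (e 0) (e 3)]; exact ha2 _ _ _ _
  have m6 : R (e 3) (e 2) (e 2) (e 3) = - R (e 2) (e 3) (e 2) (e 3) := by
    rw [hf (e 3) (e 2) (e 2) (e 3)]; exact ha2 _ _ _ _
  have m8 : R (e 2) (e 1) (e 1) (e 2) = - R (e 1) (e 2) (e 1) (e 2) := by
    rw [hf (e 2) (e 1) (e 1) (e 2)]; exact ha2 _ _ _ _
  have m10 : R (e 3) (e 1) (e 1) (e 3) = - R (e 1) (e 3) (e 1) (e 3) := by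
    rw [hf (e 3) (e 1) (e 1) (e 3)]; exact ha2 _ _ _ _
  have hB : R (e 0) (e 1) (e 2) (e 3) + R (e 0) (e 2) (e 3) (e 1)
      + R (e 0) (e 3) (e 1) (e 2) = 0 := by
    have h0 := hbi (e 0) (e 1) (e 2) (e 3)
    have e1 : R (e 1) (e 2) (e 0) (e 3) = R (e 0) (e 3) (e 1) (e 2) := hsw _ _ _ _
    have e2 : R (e 2) (e 0) (e 1) (e 3) = R (e 0) (e 2) (e 3) (e 1) := by
      rw [ha1 (e 2) (e 0) (e 1) (e 3), ha2 (e 0) (e 2) (e 1) (e 3)]; ring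
    linarith [h0, e1, e2]
  -- values
  have val1 : secondKind b R φ1 φ1 = (y^2*(R (e 0) (e 2) (e 0) (e 2)) + x^2*(R (e 1) (e 3) (e 1) (e 3)) + 2*x*y*(R (e 0) (e 3) (e 1) (e 2)) - 2*x*y*(R (e 0) (e 1) (e 2) (e 3))) := by
    rw [hφ1, sk_AA]
    simp only [hz]
    linear_combination (y*s2i)^2 * (hf (e 2) (e 0) (e 2) (e 0))
      + (x*s2i)^2 * (hf (e 3) (e 1) (e 3) (e 1))
      + (x*y*s2i^2) * (ha2 (e 0) (e 1) (e 3) (e 2) + c1 + c2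
          + ha1 (e 1) (e 0) (e 2) (e 3) + hsw (e 1) (e 2) (e 0) (e 3)
          + hf (e 3) (e 0) (e 2) (e 1) + c3)
      + (y^2*(R (e 0) (e 2) (e 0) (e 2)) + x^2*(R (e 1) (e 3) (e 1) (e 3)) + 2*x*y*(R (e 0) (e 3) (e 1) (e 2)) - 2*x*y*(R (e 0) (e 1) (e 2) (e 3))) * his2
  have val2 : secondKind b R φ2 φ2 = (x^2*(R (e 0) (e 3) (e 0) (e 3)) + y^2*(R (e 1) (e 2) (e 1) (e 2)) + 2*x*y*(R (e 0) (e 2) (e 3) (e 1)) - 2*x*y*(R (e 0) (e 1) (e 2) (e 3))) := by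
    rw [hφ2, sk_AA]
    simp only [hz]
    linear_combination (x*s2i)^2 * (hf (e 3) (e 0) (e 3) (e 0))
      + (y*s2i)^2 * (hf (e 2) (e 1) (e 2) (e 1))
      + (-(x*y)*s2i^2) * (ha2 (e 0) (e 2) (e 1) (e 3) + d3 + d4
          + hf (e 1) (e 0) (e 3) (e 2) + ha1 (e 2) (e 0) (e 3) (e 1)
          + d7 + hsw (e 2) (e 3) (e 0) (e 1))
      + (x^2*(R (e 0) (e 3) (e 0) (e 3)) + y^2*(R (e 1) (e 2) (e 1) (e 2)) + 2*x*y*(R (e 0) (e 2) (e 3) (e 1)) - 2*x*y*(R (e 0) (e 1) (e 2) (e 3))) * his2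
  have val3 : secondKind b R φ3 φ3 = ir^2 * (2*y^2*(R (e 0) (e 2) (e 0) (e 2)) + 2*x^2*(R (e 0) (e 3) (e 0) (e 3)) - 2*x^2*y^2*(R (e 2) (e 3) (e 2) (e 3))) := by
    rw [hφ3, sk_BB]
    simp only [hz]
    linear_combination (-(y^2)*ir^2) * (ha2 (e 0) (e 2) (e 2) (e 0) + m2)
      + (-(x^2)*ir^2) * (ha2 (e 0) (e 3) (e 3) (e 0) + m4)
      + (x^2*y^2*ir^2) * (ha2 (e 2) (e 3) (e 3) (e 2) + m6)
  have val4 : secondKind b R φ4 φ4 = ir^2 * (2*y^2*(R (e 1) (e 2) (e 1) (e 2)) + 2*x^2*(R (e 1) (e 3) (e 1) (e 3)) - 2*x^2*y^2*(R (e 2) (e 3) (e 2) (e 3))) := by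
    rw [hφ4, sk_BB]
    simp only [hz]
    linear_combination (-(y^2)*ir^2) * (ha2 (e 1) (e 2) (e 2) (e 1) + m8)
      + (-(x^2)*ir^2) * (ha2 (e 1) (e 3) (e 3) (e 1) + m10)
      + (x^2*y^2*ir^2) * (ha2 (e 2) (e 3) (e 3) (e 2) + m6)
  have val5 : secondKind b R φ5 φ5 = 2*s2i^2*(R (e 2) (e 3) (e 2) (e 3)) := by
    rw [hφ5, sk_BB]
    simp only [hz]
    linear_combination (-(s2i^2)) * (ha2 (e 2) (e 3) (e 3) (e 2) + m6)
  -- traceless symmetric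
  have hts1 : IsTracelessSymForm b φ1 := by
    refine ⟨fun a c => by rw [hφ1]; exact sym_A _ _ _ _ _ _ _ _, ?_⟩
    rw [hφ1, tr_A, g02, g20, g13, g31]; ring
  have hts2 : IsTracelessSymForm b φ2 := by
    refine ⟨fun a c => by rw [hφ2]; exact sym_A _ _ _ _ _ _ _ _, ?_⟩
    rw [hφ2, tr_A, g03, g30, g12, g21]; ring
  have hts3 : IsTracelessSymForm b φ3 := by
    refine ⟨fun a c => by rw [hφ3]; exact sym_B _ _ _ _ _ _ _ _, ?_⟩
    rw [hφ3, tr_B, g00, g22, g33]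
    linear_combination (-ir) * hxy
  have hts4 : IsTracelessSymForm b φ4 := by
    refine ⟨fun a c => by rw [hφ4]; exact sym_B _ _ _ _ _ _ _ _, ?_⟩
    rw [hφ4, tr_B, g11, g22, g33]
    linear_combination (-ir) * hxy
  have hts5 : IsTracelessSymForm b φ5 := by
    refine ⟨fun a c => by rw [hφ5]; exact sym_B _ _ _ _ _ _ _ _, ?_⟩
    rw [hφ5, tr_B, g22, g33, g00]; ring
  -- inner products
  have f11 : formInner b φ1 φ1 = 1 := by
    rw [hφ1, fi_AA]
    simp only [g00, g01, g02, g03, g10, g11, g12, g13, g20, g21, g22, g23, g30, g31, g32, g33]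
    linear_combination 2*s2i^2*hxy + his2
  have f22 : formInner b φ2 φ2 = 1 := by
    rw [hφ2, fi_AA]
    simp only [g00, g01, g02, g03, g10, g11, g12, g13, g20, g21, g22, g23, g30, g31, g32, g33]
    linear_combination 2*s2i^2*hxy + his2
  have f33 : formInner b φ3 φ3 = 1 := by
    rw [hφ3, fi_BB]
    simp only [g00, g01, g02, g03, g10, g11, g12, g13, g20, g21, g22, g23, g30, g31, g32, g33]
    linear_combination hir
  have f44 : formInner b φ4 φ4 = 1 := by
    rw [hφ4, fi_BB]
    simp only [g00, g01, g02, g03, g10, g11, g12, g13, g20, g21, g22, g23, g30, g31, g32, g33]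
    linear_combination hir
  have f55 : formInner b φ5 φ5 = 1 := by
    rw [hφ5, fi_BB]
    simp only [g00, g01, g02, g03, g10, g11, g12, g13, g20, g21, g22, g23, g30, g31, g32, g33]
    linear_combination his2
  have f12 : formInner b φ1 φ2 = 0 := by
    rw [hφ1, hφ2, fi_AA]
    simp only [g00, g01, g02, g03, g10, g11, g12, g13, g20, g21, g22, g23, g30, g31, g32, g33]
    ring
  have f13 : formInner b φ1 φ3 = 0 := by
    rw [hφ1, hφ3, fi_AB]
    simp only [g00, g01, g02, g03, g10, g11, g12, g13, g20, g21, g22, g23, g30, g31, g32, g33]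
    ring
  have f14 : formInner b φ1 φ4 = 0 := by
    rw [hφ1, hφ4, fi_AB]
    simp only [g00, g01, g02, g03, g10, g11, g12, g13, g20, g21, g22, g23, g30, g31, g32, g33]
    ring
  have f15 : formInner b φ1 φ5 = 0 := by
    rw [hφ1, hφ5, fi_AB]
    simp only [g00, g01, g02, g03, g10, g11, g12, g13, g20, g21, g22, g23, g30, g31, g32, g33]
    ring
  have f23 : formInner b φ2 φ3 = 0 := by
    rw [hφ2, hφ3, fi_AB]
    simp only [g00, g01, g02, g03, g10, g11, g12, g13, g20, g21, g22, g23, g30, g31, g32, g33]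
    ring
  have f24 : formInner b φ2 φ4 = 0 := by
    rw [hφ2, hφ4, fi_AB]
    simp only [g00, g01, g02, g03, g10, g11, g12, g13, g20, g21, g22, g23, g30, g31, g32, g33]
    ring
  have f25 : formInner b φ2 φ5 = 0 := by
    rw [hφ2, hφ5, fi_AB]
    simp only [g00, g01, g02, g03, g10, g11, g12, g13, g20, g21, g22, g23, g30, g31, g32, g33]
    ring
  have f21 : formInner b φ2 φ1 = 0 := by rw [fi_comm]; exact f12
  have f31 : formInner b φ3 φ1 = 0 := by rw [fi_comm]; exact f13
  have f41 : formInner b φ4 φ1 = 0 := by rw [fi_comm]; exact f14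
  have f51 : formInner b φ5 φ1 = 0 := by rw [fi_comm]; exact f15
  have f32 : formInner b φ3 φ2 = 0 := by rw [fi_comm]; exact f23
  have f42 : formInner b φ4 φ2 = 0 := by rw [fi_comm]; exact f24
  have f52 : formInner b φ5 φ2 = 0 := by rw [fi_comm]; exact f25
  have P3 : 0 < secondKind b R φ1 φ1 + secondKind b R φ2 φ2 + secondKind b R φ3 φ3 := by
    have h := h3 ![φ1, φ2, φ3] ?_ ?_
    · rw [Fin.sum_univ_three] at h
      simpa using h
    · intro a
      fin_cases a
      · exact hts1
      · exact hts2
      · exact hts3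
    · intro a a'
      fin_cases a <;> fin_cases a' <;>
        simp [f11, f22, f33, f12, f21, f13, f31, f23, f32]
  have P4 : 0 < secondKind b R φ1 φ1 + secondKind b R φ2 φ2 + secondKind b R φ4 φ4 := by
    have h := h3 ![φ1, φ2, φ4] ?_ ?_
    · rw [Fin.sum_univ_three] at h
      simpa using h
    · intro a
      fin_cases a
      · exact hts1
      · exact hts2
      · exact hts4
    · intro a a'
      fin_cases a <;> fin_cases a' <;>
        simp [f11, f22, f44, f12, f21, f14, f41, f24, f42]
  have P5 : 0 < secondKind b R φ1 φ1 + secondKind b R φ2 φ2 + secondKind b R φ5 φ5 := by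
    have h := h3 ![φ1, φ2, φ5] ?_ ?_
    · rw [Fin.sum_univ_three] at h
      simpa using h
    · intro a
      fin_cases a
      · exact hts1
      · exact hts2
      · exact hts5
    · intro a a'
      fin_cases a <;> fin_cases a' <;>
        simp [f11, f22, f55, f12, f21, f15, f51, f25, f52]
  have hw : (0:ℝ) < (1 + x ^ 4 + y ^ 4)/2 := by positivity
  have t1 : 0 < ((1 + x ^ 4 + y ^ 4)/2) *
      (secondKind b R φ1 φ1 + secondKind b R φ2 φ2 + secondKind b R φ3 φ3) := mul_pos hw P3
  have t2 : 0 < ((1 + x ^ 4 + y ^ 4)/2) *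
      (secondKind b R φ1 φ1 + secondKind b R φ2 φ2 + secondKind b R φ4 φ4) := mul_pos hw P4
  have t3 : 0 ≤ (2*x^2*y^2) *
      (secondKind b R φ1 φ1 + secondKind b R φ2 φ2 + secondKind b R φ5 φ5) :=
    mul_nonneg (by positivity) P5.le
  have key : ((1 + x ^ 4 + y ^ 4)/2) *
      (secondKind b R φ1 φ1 + secondKind b R φ2 φ2 + secondKind b R φ3 φ3)
    + ((1 + x ^ 4 + y ^ 4)/2) *
      (secondKind b R φ1 φ1 + secondKind b R φ2 φ2 + secondKind b R φ4 φ4)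
    + (2*x^2*y^2) *
      (secondKind b R φ1 φ1 + secondKind b R φ2 φ2 + secondKind b R φ5 φ5)
    = 3 * (y^2*((R (e 0) (e 2) (e 0) (e 2)) + (R (e 1) (e 2) (e 1) (e 2))) + x^2*((R (e 0) (e 3) (e 0) (e 3)) + (R (e 1) (e 3) (e 1) (e 3))) - 4*x*y*(R (e 0) (e 1) (e 2) (e 3))) := by
    rw [val1, val2, val3, val4, val5]
    linear_combination (((2*y^2*(R (e 0) (e 2) (e 0) (e 2)) + 2*x^2*(R (e 0) (e 3) (e 0) (e 3)) - 2*x^2*y^2*(R (e 2) (e 3) (e 2) (e 3))) + (2*y^2*(R (e 1) (e 2) (e 1) (e 2)) + 2*x^2*(R (e 1) (e 3) (e 1) (e 3)) - 2*x^2*y^2*(R (e 2) (e 3) (e 2) (e 3))))/2) * hir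
      + (2*x^2*y^2*(R (e 2) (e 3) (e 2) (e 3))) * his2
      + ((y^2*(R (e 0) (e 2) (e 0) (e 2)) + x^2*(R (e 1) (e 3) (e 1) (e 3)) + 2*x*y*(R (e 0) (e 3) (e 1) (e 2)) - 2*x*y*(R (e 0) (e 1) (e 2) (e 3))) + (x^2*(R (e 0) (e 3) (e 0) (e 3)) + y^2*(R (e 1) (e 2) (e 1) (e 2)) + 2*x*y*(R (e 0) (e 2) (e 3) (e 1)) - 2*x*y*(R (e 0) (e 1) (e 2) (e 3)))) * (x^2 + y^2 + 1) * hxy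
      + (4*x*y) * hB
  have hT : 0 < (y^2*((R (e 0) (e 2) (e 0) (e 2)) + (R (e 1) (e 2) (e 1) (e 2))) + x^2*((R (e 0) (e 3) (e 0) (e 3)) + (R (e 1) (e 3) (e 1) (e 3))) - 4*x*y*(R (e 0) (e 1) (e 2) (e 3))) := by linarith [t1, t2, t3, key]
  have hgoal : R (e 0) (e 2) (e 0) (e 2) + lam ^ 2 * R (e 0) (e 3) (e 0) (e 3)
      + R (e 1) (e 2) (e 1) (e 2) + lam ^ 2 * R (e 1) (e 3) (e 1) (e 3)
      - 4 * lam * R (e 0) (e 1) (e 2) (e 3)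
      = (1 + lam ^ 2) * (y^2*((R (e 0) (e 2) (e 0) (e 2)) + (R (e 1) (e 2) (e 1) (e 2))) + x^2*((R (e 0) (e 3) (e 0) (e 3)) + (R (e 1) (e 3) (e 1) (e 3))) - 4*x*y*(R (e 0) (e 1) (e 2) (e 3))) := by
    linear_combination (-((R (e 0) (e 2) (e 0) (e 2)) + (R (e 1) (e 2) (e 1) (e 2))) - lam^2*((R (e 0) (e 3) (e 0) (e 3)) + (R (e 1) (e 3) (e 1) (e 3))) + 4*lam*(R (e 0) (e 1) (e 2) (e 3))) * hy
      + (-(1 + lam^2)*(x + lam*y)*((R (e 0) (e 3) (e 0) (e 3)) + (R (e 1) (e 3) (e 1) (e 3))) + 4*(1 + lam^2)*y*(R (e 0) (e 1) (e 2) (e 3))) * hxdef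
  rw [hgoal]
  exact mul_pos h1l hT
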